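/- For m ≥ 1, let W_m denote the m×m Wronskian determinant of the monomials x, x²/2!, …, x^m/m! (with derivative orders 0 through m−1). Then W_m satisfies the recurrence W_m = Σ_{ℓ=1}^{m−1} (−1)^{ℓ+1}·(x^ℓ/ℓ!)·W_{m−ℓ} − (−1)^m·x^m/m!. -/

import Mathlib

open Polynomial

/-- The divided-power monomial `x^m/m!` in `ℚ[x]`. -/
noncomputable def dpMonomial (m : ℕ) : ℚ[X] := C (1 / m.factorial : ℚ) * X ^ m

/-- The `m×m` Wronskian determinant of the monomials `x, x²/2!, …, x^m/m!`. -/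
noncomputable def Wm (m : ℕ) : ℚ[X] :=
  Matrix.det (Matrix.of fun i j : Fin m =>
    (⇑derivative)^[(i : ℕ)] (dpMonomial ((j : ℕ) + 1)))

lemma dp_zero : dpMonomial 0 = 1 := by simp [dpMonomial]

lemma deriv_dp (n : ℕ) : derivative (dpMonomial (n + 1)) = dpMonomial n := by
  simp only [dpMonomial, derivative_C_mul, derivative_X_pow, Nat.add_sub_cancel]
  rw [← mul_assoc, ← C_mul]
  congr 1
  have h : ((n + 1 : ℕ).factorial : ℚ) = (n + 1) * n.factorial := by
    rw [Nat.factorial_succ]; push_cast; ring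
  have h1 : (n.factorial : ℚ) ≠ 0 := Nat.cast_ne_zero.mpr n.factorial_ne_zero
  have h2 : ((n + 1 : ℕ).factorial : ℚ) ≠ 0 := Nat.cast_ne_zero.mpr (n + 1).factorial_ne_zero
  push_cast
  congr 1
  field_simp
  linarith [h]

lemma iter_deriv_dp (i n : ℕ) :
    (⇑derivative)^[i] (dpMonomial n) = if i ≤ n then dpMonomial (n - i) else 0 := by
  induction i generalizing n with
  | zero => simp
  | succ i ih =>
    rw [Function.iterate_succ_apply]
    cases n with
    | zero =>
      have h : derivative (dpMonomial 0) = 0 := by simp [dpMonomial]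
      rw [h, iterate_derivative_zero]
      simp
    | succ n =>
      rw [deriv_dp, ih]
      simp only [Nat.succ_sub_succ, Nat.add_le_add_iff_right]

lemma superFactorial_ne_zero (n : ℕ) : Nat.superFactorial n ≠ 0 := by
  induction n with
  | zero => simp [Nat.superFactorial]
  | succ n ih =>
    rw [Nat.superFactorial_succ]
    exact Nat.mul_ne_zero (n + 1).factorial_ne_zero ih

lemma detD (m : ℕ) :
    (Matrix.of fun i j : Fin m => ((((j : ℕ) + 1).descFactorial (i : ℕ) : ℚ))).det
      * (m.factorial : ℚ) = ∏ j : Fin m, (((j : ℕ) + 1).factorial : ℚ) := by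
  have hT : (Matrix.of fun i j : Fin m => ((((j : ℕ) + 1).descFactorial (i : ℕ) : ℚ))).det
      = (Matrix.of fun i j : Fin m =>
          (descPochhammer ℚ (j : ℕ)).eval ((((i : ℕ) + 1 : ℕ)) : ℚ)).det := by
    rw [← Matrix.det_transpose]
    congr 1
    ext i j
    simp only [Matrix.transpose_apply, Matrix.of_apply]
    exact (descPochhammer_eval_eq_descFactorial ℚ _ _).symm
  rw [hT, ← Matrix.det_eval_matrixOfPolynomials_eq_det_vandermonde
      (fun i : Fin m => ((((i : ℕ) + 1 : ℕ)) : ℚ)) (fun j : Fin m => descPochhammer ℚ (j : ℕ))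
      (fun j => descPochhammer_natDegree (R := ℚ) (j : ℕ)) (fun j => monic_descPochhammer _ _)]
  cases m with
  | zero => simp
  | succ n =>
    have hv : (Matrix.vandermonde fun i : Fin (n + 1) => ((((i : ℕ) + 1 : ℕ)) : ℚ)).det
        = (Nat.superFactorial n : ℚ) := by
      have h0 := Matrix.det_vandermonde_id_eq_superFactorial (R := ℚ) n
      rw [← h0]
      have h1 : (fun i : Fin (n + 1) => ((((i : ℕ) + 1 : ℕ)) : ℚ))
          = fun i : Fin (n + 1) => (((i : ℕ) : ℚ) + 1) := by
        funext i; push_cast; ring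
      rw [h1, Matrix.det_vandermonde_add]
    rw [hv]
    have h2 : ∏ j : Fin (n + 1), (((j : ℕ) + 1).factorial : ℚ)
        = ((Nat.superFactorial (n + 1) : ℕ) : ℚ) := by
      rw [← Nat.prod_range_factorial_succ (n + 1), Nat.cast_prod,
        Fin.prod_univ_eq_prod_range (fun j => (((j : ℕ) + 1).factorial : ℚ))]
    rw [h2, Nat.superFactorial_succ]
    push_cast
    ring

lemma detB (m : ℕ) :
    (Matrix.of fun i j : Fin m =>
      ((((j : ℕ) + 1).descFactorial (i : ℕ) : ℚ) / (((j : ℕ) + 1).factorial : ℚ))).det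
      = 1 / m.factorial := by
  have hsplit : (Matrix.of fun i j : Fin m =>
      ((((j : ℕ) + 1).descFactorial (i : ℕ) : ℚ) / (((j : ℕ) + 1).factorial : ℚ)))
      = Matrix.of fun i j : Fin m =>
        (1 / (((j : ℕ) + 1).factorial : ℚ)) *
          (Matrix.of fun i j : Fin m => ((((j : ℕ) + 1).descFactorial (i : ℕ) : ℚ))) i j := by
    ext i j
    simp [div_eq_mul_inv, mul_comm]
  rw [hsplit, Matrix.det_mul_row]
  have hD := detD m
  have hfac : (m.factorial : ℚ) ≠ 0 := Nat.cast_ne_zero.mpr m.factorial_ne_zero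
  have hprodne : (∏ j : Fin m, (((j : ℕ) + 1).factorial : ℚ)) ≠ 0 := by
    apply Finset.prod_ne_zero_iff.mpr
    intro j _
    exact Nat.cast_ne_zero.mpr ((j : ℕ) + 1).factorial_ne_zero
  have hprodinv : (∏ i : Fin m, (1 / (((i : ℕ) + 1).factorial : ℚ)))
      = 1 / ∏ j : Fin m, (((j : ℕ) + 1).factorial : ℚ) := by
    simp [one_div, ← Finset.prod_inv_distrib]
  rw [hprodinv, div_mul_eq_mul_div, one_mul, div_eq_div_iff hprodne hfac, one_mul]
  exact hD

theorem Wm_eq (m : ℕ) : Wm m = dpMonomial m := by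
  have hXne : ((X : ℚ[X]) ^ (∑ i : Fin m, (i : ℕ))) ≠ 0 := pow_ne_zero _ X_ne_zero
  apply mul_left_cancel₀ hXne
  have hps : (∏ i : Fin m, (X : ℚ[X]) ^ (i : ℕ)) = X ^ (∑ i : Fin m, (i : ℕ)) :=
    Finset.prod_pow_eq_pow_sum _ _ _
  have hps2 : (∏ j : Fin m, (X : ℚ[X]) ^ ((j : ℕ) + 1))
      = X ^ ((∑ i : Fin m, (i : ℕ)) + m) := by
    rw [Finset.prod_pow_eq_pow_sum]
    congr 1
    rw [Finset.sum_add_distrib]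
    simp
  calc (X : ℚ[X]) ^ (∑ i : Fin m, (i : ℕ)) * Wm m
      = (∏ i : Fin m, (X : ℚ[X]) ^ (i : ℕ)) * Wm m := by rw [hps]
    _ = Matrix.det (Matrix.of fun i j : Fin m => (X : ℚ[X]) ^ (i : ℕ) *
          (Matrix.of fun i j : Fin m =>
            (⇑derivative)^[(i : ℕ)] (dpMonomial ((j : ℕ) + 1))) i j) :=
        (Matrix.det_mul_column _ _).symm
    _ = Matrix.det (Matrix.of fun i j : Fin m => (X : ℚ[X]) ^ ((j : ℕ) + 1) *
          ((Matrix.of fun i j : Fin m => ((((j : ℕ) + 1).descFactorial (i : ℕ) : ℚ) /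
            (((j : ℕ) + 1).factorial : ℚ))).map C) i j) := by
        congr 1
        refine Matrix.ext fun i j => ?_
        simp only [Matrix.of_apply, Matrix.map_apply]
        rw [iter_deriv_dp]
        by_cases h : (i : ℕ) ≤ (j : ℕ) + 1
        · rw [if_pos h, dpMonomial]
          have hc : (1 / ((((j : ℕ) + 1) - (i : ℕ)).factorial : ℚ))
              = ((((j : ℕ) + 1).descFactorial (i : ℕ) : ℚ) / (((j : ℕ) + 1).factorial : ℚ)) := by
            have hf := Nat.factorial_mul_descFactorial h
            rw [div_eq_div_iff (Nat.cast_ne_zero.mpr (((j : ℕ) + 1) - (i : ℕ)).factorial_ne_zero)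
              (Nat.cast_ne_zero.mpr ((j : ℕ) + 1).factorial_ne_zero), one_mul]
            rw [mul_comm] at hf
            exact_mod_cast hf.symm
          have hpow : (X : ℚ[X]) ^ (i : ℕ) * X ^ (((j : ℕ) + 1) - (i : ℕ))
              = X ^ ((j : ℕ) + 1) := by
            rw [← pow_add]
            congr 1
            omega
          rw [hc]
          calc (X : ℚ[X]) ^ (i : ℕ) *
              (C ((((j : ℕ) + 1).descFactorial (i : ℕ) : ℚ) / (((j : ℕ) + 1).factorial : ℚ)) *
                X ^ (((j : ℕ) + 1) - (i : ℕ)))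
              = ((X : ℚ[X]) ^ (i : ℕ) * X ^ (((j : ℕ) + 1) - (i : ℕ))) *
                C ((((j : ℕ) + 1).descFactorial (i : ℕ) : ℚ) / (((j : ℕ) + 1).factorial : ℚ)) := by
                ring
            _ = _ := by rw [hpow]
        · rw [if_neg h, Nat.descFactorial_of_lt (by omega)]
          simp
    _ = (∏ j : Fin m, (X : ℚ[X]) ^ ((j : ℕ) + 1)) *
          Matrix.det ((Matrix.of fun i j : Fin m => ((((j : ℕ) + 1).descFactorial (i : ℕ) : ℚ) /
            (((j : ℕ) + 1).factorial : ℚ))).map C) := Matrix.det_mul_row _ _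
    _ = (X : ℚ[X]) ^ (∑ i : Fin m, (i : ℕ)) * dpMonomial m := by
        rw [← RingHom.mapMatrix_apply, ← RingHom.map_det, detB, hps2, dpMonomial, pow_add]
        ring

lemma alt_sum (k : ℕ) :
    ∑ l ∈ Finset.Icc 1 k, ((-1 : ℚ)) ^ (l + 1) * ((k + 1).choose l : ℚ)
      = 1 + (-1) ^ (k + 1) := by
  have h := Int.alternating_sum_range_choose_of_ne (n := k + 1) (by omega)
  have h2 : ∑ i ∈ Finset.range (k + 2), ((-1 : ℚ)) ^ i * ((k + 1).choose i : ℚ) = 0 := by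
    exact_mod_cast h
  rw [Finset.sum_range_succ, Finset.sum_range_succ'] at h2
  simp only [pow_zero, one_mul, Nat.choose_zero_right, Nat.cast_one, Nat.choose_self,
    mul_one] at h2
  have h3 : ∑ l ∈ Finset.Icc 1 k, ((-1 : ℚ)) ^ (l + 1) * ((k + 1).choose l : ℚ)
      = ∑ i ∈ Finset.range k, ((-1 : ℚ)) ^ ((1 + i) + 1) * ((k + 1).choose (1 + i) : ℚ) := by
    rw [show Finset.Icc 1 k = Finset.Ico 1 (k + 1) from by rw [Finset.Ico_add_one_right_eq_Icc],
      Finset.sum_Ico_eq_sum_range]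
    simp
  have h4 : ∑ i ∈ Finset.range k, ((-1 : ℚ)) ^ ((1 + i) + 1) * ((k + 1).choose (1 + i) : ℚ)
      = -∑ i ∈ Finset.range k, ((-1 : ℚ)) ^ (i + 1) * ((k + 1).choose (i + 1) : ℚ) := by
    rw [← Finset.sum_neg_distrib]
    refine Finset.sum_congr rfl fun i _ => ?_
    rw [show 1 + i = i + 1 by ring, pow_succ]
    ring
  rw [h3, h4]
  linarith [h2]

/-- The recurrence
`W_m = Σ_{ℓ=1}^{m−1} (−1)^{ℓ+1}·(x^ℓ/ℓ!)·W_{m−ℓ} − (−1)^m·x^m/m!`. -/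
theorem Wm_recurrence (m : ℕ) (hm : 1 ≤ m) :
    Wm m = (∑ l ∈ Finset.Icc 1 (m - 1), (-1) ^ (l + 1) * dpMonomial l * Wm (m - l))
      - (-1) ^ m * dpMonomial m := by
  obtain ⟨k, rfl⟩ : ∃ k, m = k + 1 := ⟨m - 1, by omega⟩
  simp only [Nat.add_sub_cancel]
  have hterm : ∀ l ∈ Finset.Icc 1 k,
      ((-1 : ℚ[X])) ^ (l + 1) * dpMonomial l * Wm (k + 1 - l)
      = C (((-1 : ℚ)) ^ (l + 1) * ((k + 1).choose l : ℚ) * (1 / ((k + 1).factorial : ℚ)))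
        * X ^ (k + 1) := by
    intro l hl
    obtain ⟨hl1, hl2⟩ := Finset.mem_Icc.mp hl
    rw [Wm_eq, dpMonomial, dpMonomial]
    have e1 : ((-1 : ℚ[X])) ^ (l + 1) * (C (1 / (l.factorial : ℚ)) * X ^ l) *
        (C (1 / (((k + 1) - l).factorial : ℚ)) * X ^ ((k + 1) - l))
        = C (((-1 : ℚ)) ^ (l + 1) * (1 / (l.factorial : ℚ)) *
            (1 / (((k + 1) - l).factorial : ℚ))) * X ^ (l + ((k + 1) - l)) := by
      rw [map_mul, map_mul, map_pow, map_neg, map_one, pow_add]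
      ring
    rw [e1, show l + ((k + 1) - l) = k + 1 from by omega]
    have h5 : (1 / (l.factorial : ℚ)) * (1 / (((k + 1) - l).factorial : ℚ))
        = ((k + 1).choose l : ℚ) * (1 / ((k + 1).factorial : ℚ)) := by
      have hch := Nat.choose_mul_factorial_mul_factorial (show l ≤ k + 1 by omega)
      have hc : ((k + 1).choose l : ℚ) * (l.factorial : ℚ) * (((k + 1) - l).factorial : ℚ)
          = ((k + 1).factorial : ℚ) := by exact_mod_cast hch
      have n1 : (l.factorial : ℚ) ≠ 0 := Nat.cast_ne_zero.mpr l.factorial_ne_zero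
      have n2 : (((k + 1) - l).factorial : ℚ) ≠ 0 :=
        Nat.cast_ne_zero.mpr ((k + 1) - l).factorial_ne_zero
      have n3 : (((k + 1)).factorial : ℚ) ≠ 0 :=
        Nat.cast_ne_zero.mpr ((k + 1)).factorial_ne_zero
      field_simp
      linarith [hc]
    rw [mul_assoc, h5, ← mul_assoc]
  rw [Finset.sum_congr rfl hterm, ← Finset.sum_mul, ← map_sum, ← Finset.sum_mul, alt_sum]
  rw [Wm_eq, dpMonomial,
    show ((-1 : ℚ[X])) ^ (k + 1) = C (((-1 : ℚ)) ^ (k + 1)) from by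
      rw [map_pow, map_neg, map_one]]
  rw [← mul_assoc (C (((-1 : ℚ)) ^ (k + 1))), ← C_mul, ← sub_mul, ← map_sub]
  congr 1
  ring
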